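/- For every natural number N ≥ 1, the critical value satisfies λ_c(N) > 1/2. -/

import Mathlib

open Matrix Polynomial Filter

/-- The (N+1)×(N+1) matrix A_N(λ): diagonal −1, entry (0,1) equal to 2λ,
entries λ on the other super/sub-diagonal positions, 0 elsewhere. -/
noncomputable def matA (lam : ℝ) (N : ℕ) : Matrix (Fin (N + 1)) (Fin (N + 1)) ℝ :=
  Matrix.of fun j k =>
    if j = k then -1
    else if (j : ℕ) = 0 ∧ (k : ℕ) = 1 then 2 * lam
    else if (j : ℕ) + 1 = (k : ℕ) ∨ (k : ℕ) + 1 = (j : ℕ) then lam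
    else 0

/-- The (N+1)×(N+1) matrix C_N: zero diagonal, entry (0,1) equal to 2,
entries 1 on the other super/sub-diagonal positions, 0 elsewhere;
so that A_N(λ) = −I + λ·C_N. -/
noncomputable def matC (N : ℕ) : Matrix (Fin (N + 1)) (Fin (N + 1)) ℝ :=
  Matrix.of fun j k =>
    if j = k then 0
    else if (j : ℕ) = 0 ∧ (k : ℕ) = 1 then 2
    else if (j : ℕ) + 1 = (k : ℕ) ∨ (k : ℕ) + 1 = (j : ℕ) then 1
    else 0

/-- The critical value λ_c(N) = inf {λ > 0 : det(−A_N(λ)) = 0}. -/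
noncomputable def lamCrit (N : ℕ) : ℝ :=
  sInf {lam : ℝ | 0 < lam ∧ (-(matA lam N)).det = 0}

/-- Extension of a vector on `Fin (N+1)` to `ℕ` by zero. -/
noncomputable def gext {N : ℕ} (f : Fin (N + 1) → ℝ) (n : ℕ) : ℝ :=
  if h : n < N + 1 then f ⟨n, h⟩ else 0

lemma gext_lt {N : ℕ} (f : Fin (N + 1) → ℝ) {n : ℕ} (h : n < N + 1) :
    gext f n = f ⟨n, h⟩ := dif_pos h

lemma gext_ge {N : ℕ} (f : Fin (N + 1) → ℝ) {n : ℕ} (h : ¬ n < N + 1) :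
    gext f n = 0 := dif_neg h

lemma matA_eq (lam : ℝ) (N : ℕ) : matA lam N = lam • matC N - 1 := by
  ext j k
  simp only [matA, matC, of_apply, Matrix.sub_apply, Matrix.smul_apply, Matrix.one_apply,
    smul_eq_mul]
  split_ifs <;> ring

lemma negA_eq (lam : ℝ) (N : ℕ) : -(matA lam N) = 1 - lam • matC N := by
  rw [matA_eq, neg_sub]

lemma negA_apply (lam : ℝ) (N : ℕ) (j k : Fin (N + 1)) :
    (-(matA lam N)) j k = (if j = k then 1 else 0) - lam * matC N j k := by
  rw [negA_eq]
  simp [Matrix.sub_apply, Matrix.one_apply, Matrix.smul_apply]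

lemma matC_nonneg (N : ℕ) (j k : Fin (N + 1)) : 0 ≤ matC N j k := by
  simp only [matC, of_apply]
  split_ifs <;> norm_num

lemma matC_diag (N : ℕ) (j : Fin (N + 1)) : matC N j j = 0 := by
  simp [matC]

open Finset in
lemma matC_row_sum {N : ℕ} (hN : 1 ≤ N) (f : Fin (N + 1) → ℝ) (j : Fin (N + 1)) :
    ∑ k, matC N j k * f k =
      if (j : ℕ) = 0 then 2 * gext f 1
      else gext f ((j : ℕ) - 1) + gext f ((j : ℕ) + 1) := by
  by_cases hj0 : (j : ℕ) = 0
  · rw [if_pos hj0, gext_lt f (show 1 < N + 1 by omega)]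
    have hrow : ∀ k : Fin (N + 1), matC N j k = if k = ⟨1, by omega⟩ then 2 else 0 := by
      intro k
      simp only [matC, of_apply, Fin.ext_iff, Fin.val_mk]
      split_ifs
      any_goals norm_num
      all_goals exfalso
      all_goals omega
    simp only [hrow, ite_mul, zero_mul, Finset.sum_ite_eq', Finset.mem_univ, if_true]
  · rw [if_neg hj0]
    have hjlt := j.isLt
    obtain ⟨m, hjm⟩ : ∃ m, (j : ℕ) = m + 1 := ⟨(j : ℕ) - 1, by omega⟩
    have hmN : m + 1 ≤ N := by omega
    rw [hjm, show m + 1 - 1 = m by omega, show m + 1 + 1 = m + 2 by omega]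
    by_cases h2 : m + 2 < N + 1
    · have hrow : ∀ k : Fin (N + 1),
          matC N j k = (if k = ⟨m, by omega⟩ then 1 else 0) +
            (if k = ⟨m + 2, h2⟩ then 1 else 0) := by
        intro k
        simp only [matC, of_apply, Fin.ext_iff, Fin.val_mk]
        split_ifs
        any_goals norm_num
        all_goals exfalso
        all_goals omega
      simp only [hrow, add_mul, ite_mul, zero_mul, one_mul, Finset.sum_add_distrib,
        Finset.sum_ite_eq', Finset.mem_univ, if_true]
      rw [gext_lt f (show m < N + 1 by omega), gext_lt f h2]
    · have hrow : ∀ k : Fin (N + 1),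
          matC N j k = if k = ⟨m, by omega⟩ then 1 else 0 := by
        intro k
        simp only [matC, of_apply, Fin.ext_iff, Fin.val_mk]
        split_ifs
        any_goals norm_num
        all_goals exfalso
        all_goals omega
      simp only [hrow, ite_mul, zero_mul, one_mul, Finset.sum_ite_eq', Finset.mem_univ, if_true]
      rw [gext_lt f (show m < N + 1 by omega), gext_ge f h2]
      ring

open Finset in
lemma det_negA_ne_zero {N : ℕ} (hN : 1 ≤ N) {lam : ℝ} (h0 : 0 < lam) (h2 : lam ≤ 1 / 2) :
    (-(matA lam N)).det ≠ 0 := by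
  set w : Fin (N + 1) → ℝ := fun k => ((N : ℝ) + 1) ^ 2 - ((k : ℕ) : ℝ) ^ 2 with hw
  have hwpos : ∀ k : Fin (N + 1), 0 < w k := by
    intro k
    have hk : ((k : ℕ) : ℝ) < (N : ℝ) + 1 := by exact_mod_cast k.isLt
    have hk0 : (0 : ℝ) ≤ ((k : ℕ) : ℝ) := by positivity
    simp only [hw]
    nlinarith
  have hdet2 : ((-(matA lam N)) * Matrix.diagonal w).det ≠ 0 := by
    apply det_ne_zero_of_sum_row_lt_diag
    intro i
    have hdiag : ‖((-(matA lam N)) * Matrix.diagonal w) i i‖ = w i := by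
      rw [Matrix.mul_diagonal, negA_apply, if_pos rfl, matC_diag]
      simp [Real.norm_eq_abs, abs_of_pos (hwpos i)]
    have hterm : ∀ k ∈ Finset.univ.erase i,
        ‖((-(matA lam N)) * Matrix.diagonal w) i k‖ = lam * (matC N i k * w k) := by
      intro k hk
      have hki : k ≠ i := Finset.ne_of_mem_erase hk
      rw [Matrix.mul_diagonal, negA_apply, if_neg (Ne.symm hki), zero_sub, Real.norm_eq_abs,
        neg_mul, abs_neg, mul_assoc,
        abs_of_nonneg (mul_nonneg h0.le (mul_nonneg (matC_nonneg N i k) (hwpos k).le))]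
    rw [hdiag, Finset.sum_congr rfl hterm]
    have hsum : ∑ k ∈ Finset.univ.erase i, lam * (matC N i k * w k)
        = lam * ∑ k, matC N i k * w k := by
      rw [Finset.mul_sum, Finset.sum_erase_eq_sub (Finset.mem_univ i), matC_diag]
      ring
    rw [hsum, matC_row_sum hN w i]
    have hNr : (1 : ℝ) ≤ (N : ℝ) := by exact_mod_cast hN
    by_cases hi0 : (i : ℕ) = 0
    · rw [if_pos hi0, gext_lt w (show 1 < N + 1 by omega)]
      have hg : w ⟨1, by omega⟩ = ((N : ℝ) + 1) ^ 2 - 1 := by simp [hw]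
      have hwi : w i = ((N : ℝ) + 1) ^ 2 := by simp [hw, hi0]
      rw [hg, hwi]
      nlinarith
    · rw [if_neg hi0]
      have hilt := i.isLt
      obtain ⟨m, hjm⟩ : ∃ m, (i : ℕ) = m + 1 := ⟨(i : ℕ) - 1, by omega⟩
      have hmN : m + 1 ≤ N := by omega
      have hmr : ((m : ℝ)) + 1 ≤ (N : ℝ) := by exact_mod_cast hmN
      have hm0 : (0 : ℝ) ≤ (m : ℝ) := by positivity
      have hwi : w i = ((N : ℝ) + 1) ^ 2 - ((m : ℝ) + 1) ^ 2 := by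
        simp only [hw, hjm]
        push_cast
        ring
      rw [hjm, show m + 1 - 1 = m by omega, show m + 1 + 1 = m + 2 by omega, hwi,
        gext_lt w (show m < N + 1 by omega)]
      have hg1 : w ⟨m, by omega⟩ = ((N : ℝ) + 1) ^ 2 - (m : ℝ) ^ 2 := by simp [hw]
      rw [hg1]
      by_cases h2' : m + 2 < N + 1
      · rw [gext_lt w h2']
        have hg2 : w ⟨m + 2, h2'⟩ = ((N : ℝ) + 1) ^ 2 - ((m : ℝ) + 2) ^ 2 := by
          simp only [hw]
          push_cast
          ring
        have hmr2 : ((m : ℝ)) + 2 ≤ (N : ℝ) := by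
          have hh : m + 2 ≤ N := by omega
          exact_mod_cast hh
        rw [hg2]
        have hexpr : (0:ℝ) ≤ ((N:ℝ)+1)^2 - (m:ℝ)^2 + (((N:ℝ)+1)^2 - ((m:ℝ)+2)^2) := by
          nlinarith
        nlinarith [mul_le_mul_of_nonneg_right h2 hexpr]
      · rw [gext_ge w h2']
        have hmeq : (m : ℝ) + 1 = (N : ℝ) := by
          have hh : m + 1 = N := by omega
          exact_mod_cast hh
        rw [← hmeq]
        have hexpr : (0:ℝ) ≤ ((m:ℝ)+1+1)^2 - (m:ℝ)^2 := by nlinarith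
        nlinarith [mul_le_mul_of_nonneg_right h2 hexpr]
  intro h
  apply hdet2
  rw [Matrix.det_mul, h, zero_mul]

open Finset in
lemma exists_det_zero (N : ℕ) (hN : 1 ≤ N) :
    ∃ lam : ℝ, 0 < lam ∧ (-(matA lam N)).det = 0 := by
  set θ : ℝ := Real.pi / (2 * ((N : ℝ) + 1)) with hθ
  have hNpos : (0 : ℝ) < (N : ℝ) + 1 := by positivity
  have hθpos : 0 < θ := by
    have := Real.pi_pos
    positivity
  have hθlt : θ < Real.pi / 2 := by
    rw [hθ, div_lt_div_iff₀ (by positivity) (by norm_num)]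
    have hNr : (1 : ℝ) ≤ (N : ℝ) := by exact_mod_cast hN
    nlinarith [Real.pi_pos]
  have hc : 0 < Real.cos θ :=
    Real.cos_pos_of_mem_Ioo ⟨by linarith [Real.pi_pos], hθlt⟩
  have h2c : (2 : ℝ) * Real.cos θ ≠ 0 := by positivity
  set lam : ℝ := 1 / (2 * Real.cos θ) with hlam
  refine ⟨lam, by positivity, ?_⟩
  rw [← Matrix.exists_mulVec_eq_zero_iff]
  set v : Fin (N + 1) → ℝ := fun j => Real.cos (((j : ℕ) : ℝ) * θ) with hv
  have hNθ : ((N : ℝ) + 1) * θ = Real.pi / 2 := by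
    rw [hθ]
    field_simp
  have hcosN1 : Real.cos (((N : ℝ) + 1) * θ) = 0 := by
    rw [hNθ, Real.cos_pi_div_two]
  refine ⟨v, ?_, ?_⟩
  · intro h0
    have h1 := congrFun h0 ⟨0, by omega⟩
    simp [hv] at h1
  · funext j
    have hmv : ((-(matA lam N)) *ᵥ v) j
        = v j - lam * ∑ k, matC N j k * v k := by
      simp only [Matrix.mulVec, dotProduct, negA_apply, sub_mul, ite_mul, one_mul, zero_mul]
      rw [Finset.sum_sub_distrib, Finset.sum_ite_eq, Finset.mul_sum]
      simp [mul_assoc]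
    rw [Pi.zero_apply, hmv, matC_row_sum hN v j]
    by_cases hj0 : (j : ℕ) = 0
    · rw [if_pos hj0, gext_lt v (show 1 < N + 1 by omega)]
      have hg : v ⟨1, by omega⟩ = Real.cos θ := by simp [hv]
      have hvj : v j = 1 := by simp [hv, hj0]
      rw [hg, hvj, hlam]
      field_simp
      ring
    · rw [if_neg hj0]
      have hjlt := j.isLt
      obtain ⟨m, hjm⟩ : ∃ m, (j : ℕ) = m + 1 := ⟨(j : ℕ) - 1, by omega⟩
      rw [hjm, show m + 1 - 1 = m by omega, show m + 1 + 1 = m + 2 by omega,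
        gext_lt v (show m < N + 1 by omega)]
      have hg1 : v ⟨m, by omega⟩ = Real.cos ((m : ℝ) * θ) := by simp [hv]
      have hg2 : gext v (m + 2) = Real.cos (((m : ℝ) + 2) * θ) := by
        by_cases h2' : m + 2 < N + 1
        · rw [gext_lt v h2']
          simp only [hv]
          congr 2
          push_cast
          ring
        · have hmeq : (m : ℝ) + 2 = (N : ℝ) + 1 := by
            have hh : m + 2 = N + 1 := by omega
            exact_mod_cast hh
          rw [gext_ge v h2', hmeq, hcosN1]
      have hvj : v j = Real.cos (((m : ℝ) + 1) * θ) := by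
        simp only [hv, hjm]
        congr 2
        push_cast
        ring
      have htrig : Real.cos ((m : ℝ) * θ) + Real.cos (((m : ℝ) + 2) * θ)
          = 2 * Real.cos θ * Real.cos (((m : ℝ) + 1) * θ) := by
        have e1 : (m : ℝ) * θ = ((m : ℝ) + 1) * θ - θ := by ring
        have e2 : ((m : ℝ) + 2) * θ = ((m : ℝ) + 1) * θ + θ := by ring
        rw [e1, e2, Real.cos_sub, Real.cos_add]
        ring
      rw [hg1, hg2, hvj, htrig, hlam]
      field_simp
      ring

/-- For every N ≥ 1 the critical value satisfies λ_c(N) > 1/2. -/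
theorem lamCrit_gt_half (N : ℕ) (hN : 1 ≤ N) : 1 / 2 < lamCrit N := by
  set S := {lam : ℝ | 0 < lam ∧ (-(matA lam N)).det = 0} with hS
  have hmem : ∀ lam ∈ S, 1 / 2 < lam := by
    rintro lam ⟨h0, hd⟩
    by_contra h
    push_neg at h
    exact det_negA_ne_zero hN h0 h hd
  have hT : IsClosed {lam : ℝ | (-(matA lam N)).det = 0} := by
    have hf : Continuous fun lam : ℝ => (-(matA lam N)).det := by
      have hc : Continuous fun lam : ℝ => -(matA lam N) := by
        have heq : (fun lam : ℝ => -(matA lam N))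
            = fun lam : ℝ => (1 : Matrix (Fin (N + 1)) (Fin (N + 1)) ℝ) - lam • matC N := by
          funext lam
          rw [negA_eq]
        rw [heq]
        exact continuous_const.sub (continuous_id.smul continuous_const)
      exact hc.matrix_det
    exact isClosed_eq hf continuous_const
  have hSeq : S = Set.Ici (1 / 2 : ℝ) ∩ {lam : ℝ | (-(matA lam N)).det = 0} := by
    ext lam
    constructor
    · rintro ⟨h0, hd⟩
      exact ⟨(hmem lam ⟨h0, hd⟩).le, hd⟩
    · rintro ⟨h1, hd⟩
      exact ⟨lt_of_lt_of_le (by norm_num) h1, hd⟩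
  have hclosed : IsClosed S := by
    rw [hSeq]
    exact isClosed_Ici.inter hT
  have hne : S.Nonempty := exists_det_zero N hN
  have hbdd : BddBelow S := ⟨1 / 2, fun x hx => (hmem x hx).le⟩
  exact hmem _ (hclosed.csInf_mem hne hbdd)
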